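/- The DP-chromatic number of every cycle (in particular every even cycle) equals 3. -/

import Mathlib

open SimpleGraph

/-- The chromatic number of a graph, as a natural number. -/
noncomputable def chi {V : Type*} (G : SimpleGraph V) : ℕ := sInf {m | G.Colorable m}

/-- The join `J(G, A)` of a graph `G` with a clique on the vertex type `α`:
every vertex of `α` is adjacent to every vertex of `G` and to every other vertex of `α`. -/
def JoinT {V : Type*} (G : SimpleGraph V) (α : Type*) : SimpleGraph (V ⊕ α) where
  Adj a b :=
    match a, b with
    | Sum.inl u, Sum.inl v => G.Adj u v
    | Sum.inl _, Sum.inr _ => True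
    | Sum.inr _, Sum.inl _ => True
    | Sum.inr i, Sum.inr j => i ≠ j
  symm := ⟨by
    rintro (u | i) (v | j) h
    · exact G.adj_symm h
    · trivial
    · trivial
    · exact Ne.symm h⟩
  loopless := ⟨by
    rintro (u | i) h
    · exact G.irrefl h
    · exact h rfl⟩

/-- The join `J(G, s)` of `G` with the complete graph `K_s`. -/
def Join {V : Type*} (G : SimpleGraph V) (s : ℕ) : SimpleGraph (V ⊕ Fin s) := JoinT G (Fin s)

/-- `(L, H)` is a cover of `G`. -/
def IsCover {V W : Type*} (G : SimpleGraph V) (H : SimpleGraph W) (L : V → Finset W) : Prop :=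
  (∀ w : W, ∃! v : V, w ∈ L v) ∧
  (∀ u v : V, ∀ x ∈ L u, ∀ y ∈ L v, H.Adj x y → u = v ∨ G.Adj u v) ∧
  (∀ u : V, ∀ x ∈ L u, ∀ y ∈ L u, x ≠ y → H.Adj x y) ∧
  (∀ u v : V, G.Adj u v →
    ∀ x ∈ L u, ∀ y ∈ L v, ∀ y' ∈ L v, H.Adj x y → H.Adj x y' → y = y')

/-- An `(L, H)`-coloring: an independent set of `H` meeting each list in exactly one vertex. -/
def IsDPColoring {V W : Type*} (H : SimpleGraph W) (L : V → Finset W) (I : Set W) : Prop :=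
  (∀ x ∈ I, ∀ y ∈ I, ¬ H.Adj x y) ∧ ∀ v : V, ∃! x, x ∈ I ∧ x ∈ L v

/-- `G` is DP-colorable from every cover all of whose lists have size at least `k`. -/
def DPColorable {V : Type*} (G : SimpleGraph V) (k : ℕ) : Prop :=
  ∀ (W : Type) (H : SimpleGraph W) (L : V → Finset W),
    IsCover G H L → (∀ v, k ≤ (L v).card) → ∃ I : Set W, IsDPColoring H L I

/-- The DP-chromatic number. -/
noncomputable def dpChi {V : Type*} (G : SimpleGraph V) : ℕ := sInf {k | DPColorable G k}

/-- `G` is `k`-choosable: it has a proper coloring from any list assignment with lists of size `k`. -/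
def Choosable {V : Type*} (G : SimpleGraph V) (k : ℕ) : Prop :=
  ∀ L : V → Finset ℕ, (∀ v, k ≤ (L v).card) →
    ∃ f : V → ℕ, (∀ v, f v ∈ L v) ∧ ∀ u v : V, G.Adj u v → f u ≠ f v

/-- The list chromatic number. -/
noncomputable def listChi {V : Type*} (G : SimpleGraph V) : ℕ := sInf {k | Choosable G k}



lemma cga {n : ℕ} (hn : 3 ≤ n) (u v : Fin n) :
    (SimpleGraph.cycleGraph n).Adj u v ↔
      (u.val + 1 = v.val ∨ v.val + 1 = u.val ∨ (u.val = 0 ∧ v.val = n-1) ∨ (u.val = n-1 ∧ v.val = 0)) := by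
  have key : ∀ a b : ℕ, a < n → b < n → ((n - b + a) % n = 1 ↔ (b + 1 = a ∨ (a = 0 ∧ b = n - 1))) := by
    intro a b ha hb
    rcases Nat.lt_or_ge (n - b + a) n with h | h
    · rw [Nat.mod_eq_of_lt h]; omega
    · rw [Nat.mod_eq_sub_mod h, Nat.mod_eq_of_lt (by omega)]; omega
  have h1 : (u - v).val = (n - v.val + u.val) % n := by rw [Fin.sub_def]
  have h2 : (v - u).val = (n - u.val + v.val) % n := by rw [Fin.sub_def]
  rw [SimpleGraph.cycleGraph_adj', h1, h2,
    key u.val v.val u.isLt v.isLt, key v.val u.val v.isLt u.isLt]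
  omega


lemma upper {n : ℕ} (hn : 3 ≤ n) : DPColorable (SimpleGraph.cycleGraph n) 3 := by
  classical
  intro W H L hcov hcard
  obtain ⟨hpart, hcross, hclique, hmatch⟩ := hcov
  have npos : 0 < n := by omega
  have hA : ∀ (u v : Fin n), u ≠ v → ∀ y ∈ L u,
      ((L v).filter (fun x => H.Adj y x)).card ≤ 1 := by
    intro u v huv y hy
    rw [Finset.card_le_one]
    intro a ha b hb
    simp only [Finset.mem_filter] at ha hb
    rcases hcross u v y hy a ha.1 ha.2 with h | h
    · exact absurd h huv
    · exact hmatch u v h y hy a ha.1 b hb.1 ha.2 hb.2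
  have hB : ∀ (u1 u2 v : Fin n), u1 ≠ v → u2 ≠ v → ∀ y1 ∈ L u1, ∀ y2 ∈ L u2,
      ∃ x ∈ L v, ¬ H.Adj y1 x ∧ ¬ H.Adj y2 x := by
    intro u1 u2 v h1 h2 y1 hy1 y2 hy2
    by_contra hc
    push_neg at hc
    have hsub : L v ⊆ (L v).filter (fun x => H.Adj y1 x) ∪ (L v).filter (fun x => H.Adj y2 x) := by
      intro x hx
      rcases Classical.em (H.Adj y1 x) with h | h
      · exact Finset.mem_union_left _ (Finset.mem_filter.2 ⟨hx, h⟩)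
      · exact Finset.mem_union_right _ (Finset.mem_filter.2 ⟨hx, hc x hx h⟩)
    have hcs := Finset.card_le_card hsub
    have hcu := Finset.card_union_le ((L v).filter (fun x => H.Adj y1 x))
      ((L v).filter (fun x => H.Adj y2 x))
    have ha1 := hA u1 v h1 y1 hy1
    have ha2 := hA u2 v h2 y2 hy2
    have := hcard v
    omega
  set vt : ℕ → Fin n := fun i => ⟨i % n, Nat.mod_lt _ npos⟩ with hvtdef
  have hvt : ∀ i : Fin n, vt i.val = i := fun i => Fin.ext (Nat.mod_eq_of_lt i.isLt)
  have h0 : ∃ x, x ∈ L (vt 0) := by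
    rcases Finset.card_pos.1 (lt_of_lt_of_le (by norm_num) (hcard (vt 0))) with ⟨x, hx⟩
    exact ⟨x, hx⟩
  set base : W := h0.choose with hbase
  have hbmem : base ∈ L (vt 0) := h0.choose_spec
  set step : ℕ → W → W := fun k prev =>
    if h : ∃ x ∈ L (vt (k+1)), ¬H.Adj prev x ∧ ¬H.Adj base x then h.choose else base
    with hstepdef
  set c : ℕ → W := fun i => Nat.rec base step i with hcdef
  have hc0 : c 0 = base := rfl
  have hcs : ∀ k, c (k+1) = step k (c k) := fun k => rfl
  have hvtne : ∀ k, k + 1 < n → vt k ≠ vt (k+1) := by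
    intro k hk
    simp only [hvtdef, ne_eq, Fin.mk.injEq]
    rw [Nat.mod_eq_of_lt (by omega), Nat.mod_eq_of_lt hk]
    omega
  have hvtne0 : ∀ k, k + 1 < n → vt 0 ≠ vt (k+1) := by
    intro k hk
    simp only [hvtdef, ne_eq, Fin.mk.injEq]
    rw [Nat.mod_eq_of_lt (by omega), Nat.mod_eq_of_lt hk]
    omega
  have inv : ∀ k, k < n → c k ∈ L (vt k) ∧
      (∀ j, k = j + 1 → ¬ H.Adj (c j) (c k) ∧ ¬ H.Adj base (c k)) := by
    intro k
    induction k with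
    | zero =>
      intro _
      exact ⟨hbmem, fun j hj => by omega⟩
    | succ k ih =>
      intro hk1
      have hck : c k ∈ L (vt k) := (ih (by omega)).1
      have hex : ∃ x ∈ L (vt (k+1)), ¬H.Adj (c k) x ∧ ¬H.Adj base x :=
        hB (vt k) (vt 0) (vt (k+1)) (hvtne k hk1) (hvtne0 k hk1) (c k) hck base hbmem
      have hckk : c (k+1) = hex.choose := by
        rw [hcs k]
        simp only [hstepdef]
        rw [dif_pos hex]
      obtain ⟨hm, hn1, hn2⟩ := hex.choose_spec
      rw [hckk]
      refine ⟨hm, fun j hj => ?_⟩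
      have : j = k := by omega
      subst this
      exact ⟨hn1, hn2⟩
  set F : Fin n → W := fun i => c i.val with hF
  have hFmem : ∀ i : Fin n, F i ∈ L i := by
    intro i
    have := (inv i.val i.isLt).1
    rwa [hvt i] at this
  refine ⟨Set.range F, ?_, ?_⟩
  · rintro x ⟨i, rfl⟩ y ⟨j, rfl⟩ hadj
    rcases hcross i j (F i) (hFmem i) (F j) (hFmem j) hadj with h | h
    · subst h; exact H.irrefl hadj
    · rw [cga hn] at h
      have hbase0 : F ⟨0, by omega⟩ = base := hc0
      rcases h with h | h | h | h
      · -- i + 1 = j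
        have hj : j.val = i.val + 1 := h.symm
        have := ((inv j.val j.isLt).2 i.val hj).1
        exact this hadj
      · have hi : i.val = j.val + 1 := h.symm
        have := ((inv i.val i.isLt).2 j.val hi).1
        exact this (H.adj_symm hadj)
      · -- i = 0, j = n-1
        have hj : j.val = (n-2) + 1 := by omega
        have h2 := ((inv j.val j.isLt).2 (n-2) hj).2
        have hi0 : i = ⟨0, by omega⟩ := Fin.ext h.1
        rw [hi0] at hadj
        rw [hbase0] at hadj
        exact h2 hadj
      · have hi : i.val = (n-2) + 1 := by omega
        have h2 := ((inv i.val i.isLt).2 (n-2) hi).2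
        have hj0 : j = ⟨0, by omega⟩ := Fin.ext h.2
        rw [hj0] at hadj
        rw [hbase0] at hadj
        exact h2 (H.adj_symm hadj)
  · intro v
    refine ⟨F v, ⟨⟨v, rfl⟩, hFmem v⟩, ?_⟩
    rintro y ⟨⟨u, rfl⟩, hyL⟩
    have h1 := (hpart (F u)).unique hyL (hFmem u)
    rw [h1]

section Lower
variable (n : ℕ)

/-- the twist on the wrap-around edge -/
def tw (i j : Fin n) (a : Bool) : Bool :=
  if ((i.val = 0 ∧ j.val = n-1) ∨ (i.val = n-1 ∧ j.val = 0)) ∧ Even n then !a else a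

lemma tw_comm (i j : Fin n) (a : Bool) : tw n i j a = tw n j i a := by
  unfold tw
  by_cases h : ((i.val = 0 ∧ j.val = n-1) ∨ (i.val = n-1 ∧ j.val = 0)) ∧ Even n
  · rw [if_pos h, if_pos ⟨h.1.symm.imp And.symm And.symm, h.2⟩]
  · rw [if_neg h, if_neg (fun h' => h ⟨h'.1.symm.imp And.symm And.symm, h'.2⟩)]

lemma tw_invol (i j : Fin n) (a : Bool) : tw n i j (tw n i j a) = a := by
  unfold tw
  by_cases h : ((i.val = 0 ∧ j.val = n-1) ∨ (i.val = n-1 ∧ j.val = 0)) ∧ Even n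
  · rw [if_pos h, if_pos h, Bool.not_not]
  · rw [if_neg h, if_neg h]

def HL (n : ℕ) : SimpleGraph (Fin n × Bool) where
  Adj p q := (p.1 = q.1 ∧ p.2 ≠ q.2) ∨
    ((SimpleGraph.cycleGraph n).Adj p.1 q.1 ∧ q.2 = tw n p.1 q.1 p.2)
  symm := ⟨by
    rintro ⟨i, a⟩ ⟨j, b⟩ (⟨h1, h2⟩ | ⟨h1, h2⟩)
    · exact Or.inl ⟨h1.symm, h2.symm⟩
    · refine Or.inr ⟨h1.symm, ?_⟩
      rw [tw_comm, h2, tw_invol]⟩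
  loopless := ⟨by
    rintro ⟨i, a⟩ (⟨h1, h2⟩ | ⟨h1, h2⟩)
    · exact h2 rfl
    · exact (SimpleGraph.irrefl _) h1⟩

def LL (n : ℕ) : Fin n → Finset (Fin n × Bool) := fun v => {(v, false), (v, true)}

lemma memLL {n : ℕ} {x : Fin n × Bool} {v : Fin n} : x ∈ LL n v ↔ x.1 = v := by
  unfold LL
  simp only [Finset.mem_insert, Finset.mem_singleton]
  constructor
  · rintro (rfl | rfl) <;> rfl
  · intro h
    rcases x with ⟨i, a⟩
    cases a <;> simp_all


lemma lower {n : ℕ} (hn : 3 ≤ n) : ¬ DPColorable (SimpleGraph.cycleGraph n) 2 := by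
  intro hDP
  classical
  have hcov : IsCover (SimpleGraph.cycleGraph n) (HL n) (LL n) := by
    refine ⟨?_, ?_, ?_, ?_⟩
    · intro w
      exact ⟨w.1, memLL.2 rfl, fun v hv => (memLL.1 hv).symm⟩
    · intro u v x hx y hy hadj
      rcases hadj with ⟨h1, _⟩ | ⟨h1, _⟩
      · left; rw [← memLL.1 hx, ← memLL.1 hy, h1]
      · right; rwa [memLL.1 hx, memLL.1 hy] at h1
    · intro u x hx y hy hne
      left
      refine ⟨(memLL.1 hx).trans (memLL.1 hy).symm, fun h2 => hne ?_⟩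
      exact Prod.ext ((memLL.1 hx).trans (memLL.1 hy).symm) h2
    · intro u v hadj x hx y hy y' hy' h1 h2
      have hxu := memLL.1 hx
      have hyv := memLL.1 hy
      have hy'v := memLL.1 hy'
      have hne : u ≠ v := hadj.ne
      have e1 : y.2 = tw n u v x.2 := by
        rcases h1 with ⟨ha, _⟩ | ⟨_, hb⟩
        · exact absurd (hxu ▸ hyv ▸ ha) hne
        · rwa [hxu, hyv] at hb
      have e2 : y'.2 = tw n u v x.2 := by
        rcases h2 with ⟨ha, _⟩ | ⟨_, hb⟩
        · exact absurd (hxu ▸ hy'v ▸ ha) hne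
        · rwa [hxu, hy'v] at hb
      exact Prod.ext (hyv.trans hy'v.symm) (e1.trans e2.symm)
  have hcard : ∀ v, 2 ≤ (LL n v).card := by
    intro v
    unfold LL
    rw [Finset.card_insert_of_notMem (by simp), Finset.card_singleton]
  obtain ⟨I, hind, huniq⟩ := hDP (Fin n × Bool) (HL n) (LL n) hcov hcard
  have npos : 0 < n := by omega
  set x : Fin n → Fin n × Bool := fun i => (huniq i).choose with hx
  have hxI : ∀ i, x i ∈ I := fun i => (huniq i).choose_spec.1.1
  have hx1 : ∀ i, (x i).1 = i := fun i => memLL.1 (huniq i).choose_spec.1.2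
  set d : ℕ → Bool := fun k => if h : k < n then (x ⟨k, h⟩).2 else false with hd
  have hnoadj : ∀ i j : Fin n, ¬ (HL n).Adj (x i) (x j) :=
    fun i j => hind _ (hxI i) _ (hxI j)
  -- consecutive step
  have hstep : ∀ k, k + 1 < n → d (k+1) = ! d k := by
    intro k hk
    have hkn : k < n := by omega
    have hadj : (SimpleGraph.cycleGraph n).Adj ⟨k, hkn⟩ ⟨k+1, hk⟩ := by
      rw [cga hn]; left; rfl
    have hnw : tw n (⟨k, hkn⟩ : Fin n) ⟨k+1, hk⟩ (d k) = d k := by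
      unfold tw
      rw [if_neg]
      rintro ⟨(⟨h1, h2⟩ | ⟨h1, h2⟩), _⟩ <;>
        (rw [Fin.val_mk] at h1; rw [Fin.val_mk] at h2; omega)
    have := hnoadj ⟨k, hkn⟩ ⟨k+1, hk⟩
    rw [HL] at this
    simp only [SimpleGraph.fromRel_adj] at this
    by_contra hne
    apply this
    right
    constructor
    · rwa [hx1, hx1]
    · rw [hx1, hx1]
      have hdk : (x ⟨k, hkn⟩).2 = d k := by simp only [hd]; rw [dif_pos hkn]
      have hdk1 : (x ⟨k+1, hk⟩).2 = d (k+1) := by simp only [hd]; rw [dif_pos hk]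
      rw [hdk, hdk1, hnw]
      revert hne
      cases d (k+1) <;> cases d k <;> simp
  -- closed form
  have hform : ∀ k, k < n → d k = (if Even k then d 0 else ! d 0) := by
    intro k
    induction k with
    | zero => intro _; simp
    | succ k ih =>
      intro hk
      rw [hstep k hk, ih (by omega)]
      rcases Nat.even_or_odd k with h | h
      · rw [if_pos h, if_neg (by rw [Nat.even_add_one]; exact fun hc => hc h)]
      · have h' : ¬ Even k := Nat.not_even_iff_odd.2 h
        rw [if_neg h', if_pos (Nat.even_add_one.2 h'), Bool.not_not]
  -- wrap edge
  have hn1 : n - 1 < n := by omega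
  have hadjw : (SimpleGraph.cycleGraph n).Adj ⟨n-1, hn1⟩ ⟨0, npos⟩ := by
    rw [cga hn]; right; right; right; exact ⟨rfl, rfl⟩
  have hwrap := hnoadj ⟨n-1, hn1⟩ ⟨0, npos⟩
  have hwrapval : ¬ ((x ⟨0, npos⟩).2 = tw n ⟨n-1, hn1⟩ ⟨0, npos⟩ ((x ⟨n-1, hn1⟩).2)) := by
    intro h
    apply hwrap
    right
    rw [hx1, hx1]
    exact ⟨hadjw, h⟩
  have hd0 : (x ⟨0, npos⟩).2 = d 0 := by simp only [hd]; rw [dif_pos npos]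
  have hdn1 : (x ⟨n-1, hn1⟩).2 = d (n-1) := by simp only [hd]; rw [dif_pos hn1]
  rw [hd0, hdn1] at hwrapval
  have hdform := hform (n-1) hn1
  unfold tw at hwrapval
  rcases Nat.even_or_odd n with hpar | hpar
  · rw [if_pos ⟨Or.inr ⟨rfl, rfl⟩, hpar⟩] at hwrapval
    have : ¬ Even (n - 1) := by
      rcases hpar with ⟨m, hm⟩
      rintro ⟨m', hm'⟩; omega
    rw [if_neg this] at hdform
    rw [hdform, Bool.not_not] at hwrapval
    exact hwrapval rfl
  · rw [if_neg (fun h => (Nat.not_even_iff_odd.2 hpar) h.2)] at hwrapval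
    have : Even (n - 1) := by
      rcases hpar with ⟨m, hm⟩
      exact ⟨m, by omega⟩
    rw [if_pos this] at hdform
    rw [hdform] at hwrapval
    exact hwrapval rfl
end Lower

lemma DPColorable_mono {V : Type*} (G : SimpleGraph V) {k m : ℕ} (h : k ≤ m)
    (hk : DPColorable G k) : DPColorable G m := by
  intro W H L hcov hcard
  exact hk W H L hcov (fun v => le_trans h (hcard v))

/-- The DP-chromatic number of every cycle (in particular every even cycle) equals `3`. -/
theorem dpChi_cycle (n : ℕ) (hn : 3 ≤ n) :
    dpChi (SimpleGraph.cycleGraph n) = 3 := by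
  have h3 : DPColorable (SimpleGraph.cycleGraph n) 3 := upper hn
  have h2 : ¬ DPColorable (SimpleGraph.cycleGraph n) 2 := lower hn
  unfold dpChi
  refine le_antisymm (Nat.sInf_le h3) (le_csInf ⟨3, h3⟩ ?_)
  intro b hb
  by_contra hlt
  push_neg at hlt
  exact h2 (DPColorable_mono _ (by omega) hb)
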